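/- arXiv:2401.04803 — 4 statements merged into one kernel-verified Lean document; each statement's English description precedes it below -/
import Mathlib

section
/- Consider the censored regression observation y = max(0, μ + ε) where ε ~ N(0, σ²), σ > 0, and μ ∈ ℝ. Then for every integer k ≥ 1, E[(y^{k+1} − y^k·μ − σ²·k·y^{k-1})·1{y>0}] = 0; equivalently, ∫_{(0,∞)} (u^{k+1} − u^k μ − σ² k u^{k-1}) φ_{μ,σ}(u) du = 0, where on the event {y > 0} one has y = μ + ε. -/
open MeasureTheory Real Filter


lemma integrable_pow_mul_gauss {b : ℝ} (hb : 0 < b) (n : ℕ) :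
    Integrable fun x : ℝ => x ^ n * Real.exp (-b * x ^ 2) := by
  have hC : (0:ℝ) < n.factorial * (2 / b) ^ n := by positivity
  have h1 : Integrable fun x : ℝ =>
      Real.exp (-b * x ^ 2) + (n.factorial * (2 / b) ^ n) * Real.exp (-(b / 2) * x ^ 2) :=
    (integrable_exp_neg_mul_sq hb).add ((integrable_exp_neg_mul_sq (half_pos hb)).const_mul _)
  refine h1.mono' ?_ ?_
  · exact ((continuous_pow n).mul (by continuity)).aestronglyMeasurable
  · filter_upwards with x
    rw [Real.norm_eq_abs, abs_mul, abs_of_nonneg (Real.exp_pos _).le, abs_pow]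
    rcases le_total (|x|) 1 with h | h
    · have h1 : |x| ^ n ≤ 1 := pow_le_one₀ (abs_nonneg x) h
      nlinarith [Real.exp_pos (-b * x ^ 2), Real.exp_pos (-(b/2) * x ^ 2),
        mul_le_of_le_one_left (Real.exp_pos (-b * x ^ 2)).le h1]
    · have h2 : |x| ^ n ≤ (x ^ 2) ^ n := by
        rw [← sq_abs]
        exact pow_le_pow_left₀ (abs_nonneg x) (le_self_pow₀ h (by norm_num)) n
      have h3 : (b / 2 * x ^ 2) ^ n / n.factorial ≤ Real.exp (b / 2 * x ^ 2) := by
        have hx0 : (0:ℝ) ≤ b / 2 * x ^ 2 := by positivity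
        calc (b / 2 * x ^ 2) ^ n / n.factorial
            ≤ ∑ i ∈ Finset.range (n + 1), (b / 2 * x ^ 2) ^ i / i.factorial :=
              Finset.single_le_sum (f := fun i => (b / 2 * x ^ 2) ^ i / i.factorial)
                (fun i _ => by positivity) (Finset.self_mem_range_succ n)
          _ ≤ Real.exp (b / 2 * x ^ 2) := Real.sum_le_exp_of_nonneg hx0 (n + 1)
      have h4 : (x ^ 2) ^ n ≤ n.factorial * (2 / b) ^ n * Real.exp (b / 2 * x ^ 2) := by
        rw [div_le_iff₀ (by positivity), mul_pow] at h3
        calc (x ^ 2) ^ n = (n.factorial * (2 / b) ^ n) * ((b/2) ^ n * (x ^ 2) ^ n / n.factorial) := by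
              field_simp [Nat.factorial_ne_zero, hb.ne']
              rw [mul_assoc, ← mul_pow, div_mul_div_comm, mul_comm 2 b, div_self (mul_ne_zero hb.ne' two_ne_zero), one_pow, mul_one]
          _ ≤ _ := by
              rw [mul_le_mul_iff_right₀ hC, div_le_iff₀ (by positivity : (0:ℝ) < (n.factorial:ℝ))]
              calc (b/2) ^ n * (x ^ 2) ^ n ≤ Real.exp (b / 2 * x ^ 2) * n.factorial := by
                    nlinarith [h3]
                _ = _ := by ring_nf
      calc |x| ^ n * Real.exp (-b * x ^ 2)
          ≤ (n.factorial * (2 / b) ^ n * Real.exp (b / 2 * x ^ 2)) * Real.exp (-b * x ^ 2) :=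
            mul_le_mul_of_nonneg_right (h2.trans h4) (Real.exp_pos _).le
        _ = n.factorial * (2 / b) ^ n * Real.exp (-(b / 2) * x ^ 2) := by
            rw [mul_assoc, ← Real.exp_add]; ring_nf
        _ ≤ _ := le_add_of_nonneg_left (Real.exp_pos _).le

lemma integrable_pow_mul_gauss_shift {b : ℝ} (hb : 0 < b) (n : ℕ) (c : ℝ) :
    Integrable fun x : ℝ => x ^ n * Real.exp (-b * (x - c) ^ 2) := by
  have h : Integrable fun y : ℝ => (y + c) ^ n * Real.exp (-b * y ^ 2) := by
    have heq : (fun y : ℝ => (y + c) ^ n * Real.exp (-b * y ^ 2)) =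
        fun y => ∑ i ∈ Finset.range (n + 1),
          (c ^ (n - i) * (n.choose i : ℝ)) * (y ^ i * Real.exp (-b * y ^ 2)) := by
      ext y
      rw [add_pow, Finset.sum_mul]
      refine Finset.sum_congr rfl fun i _ => by ring
    rw [heq]
    exact integrable_finset_sum _ fun i _ => (integrable_pow_mul_gauss hb i).const_mul _
  have := h.comp_sub_right c
  simpa [sub_add_cancel] using this

lemma tendsto_pow_mul_gauss {b : ℝ} (hb : 0 < b) (n : ℕ) :
    Tendsto (fun x : ℝ => x ^ n * Real.exp (-b * x ^ 2)) atTop (nhds 0) := by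
  have hlim : Tendsto (fun x : ℝ => Real.exp (-(1/2) * x)) atTop (nhds 0) := by
    have := Real.tendsto_exp_neg_atTop_nhds_zero.comp
      (tendsto_id.const_mul_atTop (by norm_num : (0:ℝ) < 1/2))
    simpa [Function.comp_def, neg_mul] using this
  have h := (rpow_mul_exp_neg_mul_sq_isLittleO_exp_neg hb (n : ℝ)).trans_tendsto hlim
  refine h.congr' ?_
  filter_upwards [eventually_gt_atTop (0:ℝ)] with x hx
  rw [Real.rpow_natCast]

lemma tendsto_pow_mul_gauss_shift {b : ℝ} (hb : 0 < b) (n : ℕ) (c : ℝ) :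
    Tendsto (fun x : ℝ => x ^ n * Real.exp (-b * (x - c) ^ 2)) atTop (nhds 0) := by
  have h : Tendsto (fun y : ℝ => (y + c) ^ n * Real.exp (-b * y ^ 2)) atTop (nhds 0) := by
    have heq : (fun y : ℝ => (y + c) ^ n * Real.exp (-b * y ^ 2)) =
        fun y => ∑ i ∈ Finset.range (n + 1),
          (c ^ (n - i) * (n.choose i : ℝ)) * (y ^ i * Real.exp (-b * y ^ 2)) := by
      ext y
      rw [add_pow, Finset.sum_mul]
      refine Finset.sum_congr rfl fun i _ => by ring
    rw [heq]
    have : (0:ℝ) = ∑ i ∈ Finset.range (n + 1), (c ^ (n - i) * (n.choose i : ℝ)) * 0 := by simp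
    rw [this]
    exact tendsto_finset_sum _ fun i _ => (tendsto_pow_mul_gauss hb i).const_mul _
  have h2 : Tendsto (fun x : ℝ => x - c) atTop atTop := tendsto_atTop_add_const_right _ _ tendsto_id
  have := h.comp h2
  simpa [Function.comp_def, sub_add_cancel] using this

/-- Density of the normal distribution `N(μ, σ²)` on `ℝ`. -/
noncomputable def normalPDF (μ σ u : ℝ) : ℝ :=
  (1 / (σ * Real.sqrt (2 * Real.pi))) * Real.exp (-(u - μ) ^ 2 / (2 * σ ^ 2))

/-- Amemiya's moment condition for the censored regression model `y = max(0, μ + ε)`,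
`ε ~ N(0, σ²)`: for every `k ≥ 1`,
`E[(y^{k+1} − y^k·μ − σ²·k·y^{k-1})·1{y>0}] = 0`, i.e.
`∫_{(0,∞)} (u^{k+1} − u^k μ − σ² k u^{k-1}) φ_{μ,σ}(u) du = 0`. -/
theorem amemiya_moment_condition (μ σ : ℝ) (hσ : 0 < σ) (k : ℕ) (hk : 1 ≤ k) :
    ∫ u in Set.Ioi (0 : ℝ),
        (u ^ (k + 1) - u ^ k * μ - σ ^ 2 * (k : ℝ) * u ^ (k - 1)) * normalPDF μ σ u = 0 := by
  set b : ℝ := 1 / (2 * σ ^ 2) with hbdef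
  have hb : 0 < b := by positivity
  set C : ℝ := 1 / (σ * Real.sqrt (2 * Real.pi)) with hCdef
  have hE : ∀ u : ℝ, normalPDF μ σ u = C * Real.exp (-b * (u - μ) ^ 2) := by
    intro u
    unfold normalPDF
    rw [← hCdef]
    congr 1
    rw [hbdef]
    ring
  set F : ℝ → ℝ := fun u => -σ ^ 2 * (u ^ k * normalPDF μ σ u) with hFdef
  have hderiv : ∀ u : ℝ, HasDerivAt F
      ((u ^ (k + 1) - u ^ k * μ - σ ^ 2 * (k : ℝ) * u ^ (k - 1)) * normalPDF μ σ u) u := by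
    intro u
    have hg : HasDerivAt (fun u : ℝ => -(u - μ) ^ 2 / (2 * σ ^ 2)) (-(u - μ) / σ ^ 2) u := by
      have h1 : HasDerivAt (fun u : ℝ => u - μ) 1 u := (hasDerivAt_id u).sub_const μ
      have h2 : HasDerivAt (fun u : ℝ => (u - μ) ^ 2) (2 * (u - μ)) u := by
        simpa using h1.fun_pow 2
      have h3 := (h2.neg).div_const (2 * σ ^ 2)
      refine h3.congr_deriv ?_
      field_simp
    have hexp : HasDerivAt (fun u : ℝ => Real.exp (-(u - μ) ^ 2 / (2 * σ ^ 2)))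
        (Real.exp (-(u - μ) ^ 2 / (2 * σ ^ 2)) * (-(u - μ) / σ ^ 2)) u := hg.exp
    have hpdf : HasDerivAt (normalPDF μ σ)
        (C * (Real.exp (-(u - μ) ^ 2 / (2 * σ ^ 2)) * (-(u - μ) / σ ^ 2))) u := by
      unfold normalPDF
      exact hexp.const_mul C
    have hpow : HasDerivAt (fun u : ℝ => u ^ k) ((k : ℝ) * u ^ (k - 1)) u := hasDerivAt_pow k u
    have hF := ((hpow.mul hpdf).const_mul (-σ ^ 2) : HasDerivAt F _ u)
    refine hF.congr_deriv ?_
    unfold normalPDF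
    rw [← hCdef]
    have hσ2 : σ ^ 2 ≠ 0 := by positivity
    field_simp
    ring
  have hFtop : Tendsto F atTop (nhds 0) := by
    have h1 := (tendsto_pow_mul_gauss_shift hb k μ).const_mul (-σ ^ 2 * C)
    rw [mul_zero] at h1
    refine h1.congr fun u => ?_
    rw [hFdef]
    simp only [hE u]
    ring
  have hint : IntegrableOn
      (fun u => (u ^ (k + 1) - u ^ k * μ - σ ^ 2 * (k : ℝ) * u ^ (k - 1)) * normalPDF μ σ u)
      (Set.Ioi (0 : ℝ)) := by
    have h1 := ((integrable_pow_mul_gauss_shift hb (k + 1) μ).const_mul C).sub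
      (((integrable_pow_mul_gauss_shift hb k μ).const_mul (C * μ)).add
        ((integrable_pow_mul_gauss_shift hb (k - 1) μ).const_mul (C * σ ^ 2 * k)))
    refine (h1.congr ?_).integrableOn
    filter_upwards with u
    simp only [Pi.sub_apply, Pi.add_apply, hE u]
    ring
  have key := integral_Ioi_of_hasDerivAt_of_tendsto' (a := 0)
    (fun x _ => hderiv x) hint hFtop
  rw [key, hFdef]
  have : (0:ℝ) ^ k = 0 := zero_pow (by omega)
  simp [this]
end

section
/- Let n ≥ 1 and let x_t, x_s, β ∈ ℝⁿ, α ∈ ℝ, σ_t, σ_s > 0. Let U_t = x_t'β + α + ε_t and U_s = x_s'β + α + ε_s, where ε_t ~ N(0, σ_t²) and ε_s ~ N(0, σ_s²) are independent. Then E[(U_t²U_s − U_s²U_t − U_tU_s·(x_t − x_s)'β − (U_s·σ_t² − U_t·σ_s²))·1{U_t>0, U_s>0}] = 0. -/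
open MeasureTheory

private lemma normalPDF_eq (μ σ : ℝ) (u : ℝ) :
    normalPDF μ σ u = (1 / (σ * Real.sqrt (2 * Real.pi)))
      * Real.exp (-(2 * σ ^ 2)⁻¹ * (u - μ) ^ 2) := by
  simp only [normalPDF]
  rw [show -(u - μ) ^ 2 / (2 * σ ^ 2) = -(2 * σ ^ 2)⁻¹ * (u - μ) ^ 2 by ring]

private lemma integrable_pow_mul_exp_neg_mul_sq' {b : ℝ} (hb : 0 < b) (k : ℕ) :
    Integrable fun x : ℝ => x ^ k * Real.exp (-b * x ^ 2) := by
  have h := integrable_rpow_mul_exp_neg_mul_sq hb (s := (k : ℝ))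
    (lt_of_lt_of_le (by norm_num) (Nat.cast_nonneg k))
  simpa [Real.rpow_natCast] using h

private lemma integrable_shiftpow_mul_normalPDF (μ σ : ℝ) (hσ : 0 < σ) (k : ℕ) :
    Integrable fun u : ℝ => (u - μ) ^ k * normalPDF μ σ u := by
  have hb : 0 < (2 * σ ^ 2)⁻¹ := by positivity
  have h := ((integrable_pow_mul_exp_neg_mul_sq' hb k).comp_sub_right μ).const_mul
    (1 / (σ * Real.sqrt (2 * Real.pi)))
  refine h.congr (Filter.Eventually.of_forall fun u => ?_)
  simp only [normalPDF_eq]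
  ring

private lemma hasDerivAt_normalPDF (μ σ : ℝ) (hσ : 0 < σ) (u : ℝ) :
    HasDerivAt (fun u => normalPDF μ σ u)
      (normalPDF μ σ u * (-(u - μ) / σ ^ 2)) u := by
  have h1 : HasDerivAt (fun u : ℝ => -(u - μ) ^ 2 / (2 * σ ^ 2))
      (-(2 * (u - μ)) / (2 * σ ^ 2)) u := by
    have := (((hasDerivAt_id u).sub_const μ).pow 2).neg
    simpa using this.div_const (2 * σ ^ 2)
  have h2 := (h1.exp).const_mul (1 / (σ * Real.sqrt (2 * Real.pi)))
  refine h2.congr_deriv ?_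
  have hσ2 : (σ : ℝ) ^ 2 ≠ 0 := by positivity
  simp only [normalPDF]
  field_simp

private lemma tendsto_mul_normalPDF_atTop (μ σ : ℝ) (hσ : 0 < σ) :
    Filter.Tendsto (fun u : ℝ => u * normalPDF μ σ u) Filter.atTop (nhds 0) := by
  set b : ℝ := (2 * σ ^ 2)⁻¹ with hbdef
  have hb : 0 < b := by positivity
  set C : ℝ := 1 / (σ * Real.sqrt (2 * Real.pi)) with hCdef
  -- first : v * exp (-(b * v)) → 0
  have h1 : Filter.Tendsto (fun v : ℝ => v * Real.exp (-(b * v))) Filter.atTop (nhds 0) := by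
    have base := Real.tendsto_pow_mul_exp_neg_atTop_nhds_zero 1
    have hcomp : Filter.Tendsto (fun v : ℝ => b * v) Filter.atTop Filter.atTop :=
      Filter.tendsto_id.const_mul_atTop hb
    have h := (base.comp hcomp).const_mul (1 / b)
    simp only [mul_zero] at h
    refine h.congr fun v => ?_
    simp only [Function.comp, pow_one]
    field_simp
  -- v * exp (-b * v^2) → 0 by squeeze
  have h2 : Filter.Tendsto (fun v : ℝ => v * Real.exp (-b * v ^ 2)) Filter.atTop (nhds 0) := by
    refine squeeze_zero' ?_ ?_ h1
    · filter_upwards [Filter.eventually_ge_atTop (0 : ℝ)] with v hv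
      positivity
    · filter_upwards [Filter.eventually_ge_atTop (1 : ℝ)] with v hv
      have hv0 : 0 ≤ v := le_trans zero_le_one hv
      have hle : b * v ≤ b * v ^ 2 := by
        have : v ≤ v ^ 2 := by nlinarith
        exact mul_le_mul_of_nonneg_left this hb.le
      have hel := Real.exp_le_exp.mpr (neg_le_neg hle)
      simp only [neg_mul]
      exact mul_le_mul_of_nonneg_left hel hv0
  -- exp (-b * v^2) → 0
  have h3 : Filter.Tendsto (fun v : ℝ => Real.exp (-b * v ^ 2)) Filter.atTop (nhds 0) := by
    apply Real.tendsto_exp_atBot.comp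
    have h : Filter.Tendsto (fun v : ℝ => b * v ^ 2) Filter.atTop Filter.atTop :=
      (Filter.tendsto_pow_atTop (two_ne_zero)).const_mul_atTop hb
    simpa [neg_mul] using Filter.tendsto_neg_atBot_iff.mpr h
  have hg : Filter.Tendsto
      (fun v : ℝ => C * (v * Real.exp (-b * v ^ 2)) + (C * μ) * Real.exp (-b * v ^ 2))
      Filter.atTop (nhds 0) := by
    simpa using (h2.const_mul C).add (h3.const_mul (C * μ))
  have hshift : Filter.Tendsto (fun u : ℝ => u - μ) Filter.atTop Filter.atTop :=
    Filter.tendsto_atTop_add_const_right _ (-μ) Filter.tendsto_id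
  refine (hg.comp hshift).congr fun u => ?_
  simp only [Function.comp]
  rw [normalPDF_eq]
  ring

/-- The key one-dimensional identity:
`∫_{0}^{∞} (u² - uμ - σ²) φ_{μ,σ}(u) du = 0`. -/
private lemma key_integral (μ σ : ℝ) (hσ : 0 < σ) :
    ∫ u in Set.Ioi (0 : ℝ), (u ^ 2 - u * μ - σ ^ 2) * normalPDF μ σ u = 0 := by
  have hσ2 : (σ : ℝ) ^ 2 ≠ 0 := by positivity
  have hderiv : ∀ u ∈ Set.Ici (0 : ℝ),
      HasDerivAt (fun u => -σ ^ 2 * (u * normalPDF μ σ u))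
        ((u ^ 2 - u * μ - σ ^ 2) * normalPDF μ σ u) u := by
    intro u _
    have h := ((hasDerivAt_id u).mul (hasDerivAt_normalPDF μ σ hσ u)).const_mul (-σ ^ 2)
    refine h.congr_deriv ?_
    simp only [id]
    field_simp
    ring
  have hint : IntegrableOn (fun u => (u ^ 2 - u * μ - σ ^ 2) * normalPDF μ σ u)
      (Set.Ioi (0 : ℝ)) := by
    have h2 := integrable_shiftpow_mul_normalPDF μ σ hσ 2
    have h1 := integrable_shiftpow_mul_normalPDF μ σ hσ 1
    have h0 := integrable_shiftpow_mul_normalPDF μ σ hσ 0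
    have := (h2.add (h1.const_mul μ)).sub (h0.const_mul (σ ^ 2))
    refine (this.congr (Filter.Eventually.of_forall fun u => ?_)).integrableOn
    simp only [Pi.add_apply, Pi.sub_apply, pow_one, pow_zero, one_mul]
    ring
  have htend : Filter.Tendsto (fun u => -σ ^ 2 * (u * normalPDF μ σ u))
      Filter.atTop (nhds 0) := by
    simpa using (tendsto_mul_normalPDF_atTop μ σ hσ).const_mul (-σ ^ 2)
  have := integral_Ioi_of_hasDerivAt_of_tendsto' hderiv hint htend
  simpa using this

/-- Pairwise moment condition (hm1) for the fixed-effects panel Tobit model with errors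
independent over time: with `U_t ~ N(x_t'β + α, σ_t²)` and `U_s ~ N(x_s'β + α, σ_s²)`
independent,
`E[(U_t²U_s − U_s²U_t − U_tU_s·(x_t − x_s)'β − (U_s σ_t² − U_t σ_s²))·1{U_t>0,U_s>0}] = 0`. -/
theorem panel_tobit_pairwise_moment (n : ℕ) (hn : 1 ≤ n) (xt xs β : Fin n → ℝ) (α : ℝ)
    (σt σs : ℝ) (hσt : 0 < σt) (hσs : 0 < σs) :
    ∫ p in Set.Ioi (0 : ℝ) ×ˢ Set.Ioi (0 : ℝ),
        (p.1 ^ 2 * p.2 - p.2 ^ 2 * p.1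
            - p.1 * p.2 * (∑ i, (xt i - xs i) * β i)
            - (p.2 * σt ^ 2 - p.1 * σs ^ 2))
          * (normalPDF (∑ i, xt i * β i + α) σt p.1
              * normalPDF (∑ i, xs i * β i + α) σs p.2) = 0 := by
  set μt : ℝ := ∑ i, xt i * β i + α with hμt
  set μs : ℝ := ∑ i, xs i * β i + α with hμs
  have hdiff : (∑ i, (xt i - xs i) * β i) = μt - μs := by
    simp only [hμt, hμs, sub_mul, Finset.sum_sub_distrib]
    ring
  set F : ℝ → ℝ := fun u => (u ^ 2 - u * μt - σt ^ 2) * normalPDF μt σt u with hF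
  set G : ℝ → ℝ := fun v => v * normalPDF μs σs v with hG
  set H : ℝ → ℝ := fun u => u * normalPDF μt σt u with hH
  set K : ℝ → ℝ := fun v => (v ^ 2 - v * μs - σs ^ 2) * normalPDF μs σs v with hK
  -- integrabilities
  have intF : Integrable F := by
    have h2 := integrable_shiftpow_mul_normalPDF μt σt hσt 2
    have h1 := integrable_shiftpow_mul_normalPDF μt σt hσt 1
    have h0 := integrable_shiftpow_mul_normalPDF μt σt hσt 0
    refine ((h2.add (h1.const_mul μt)).sub (h0.const_mul (σt ^ 2))).congr
      (Filter.Eventually.of_forall fun u => ?_)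
    simp only [hF, Pi.add_apply, Pi.sub_apply, pow_one, pow_zero, one_mul]
    ring
  have intK : Integrable K := by
    have h2 := integrable_shiftpow_mul_normalPDF μs σs hσs 2
    have h1 := integrable_shiftpow_mul_normalPDF μs σs hσs 1
    have h0 := integrable_shiftpow_mul_normalPDF μs σs hσs 0
    refine ((h2.add (h1.const_mul μs)).sub (h0.const_mul (σs ^ 2))).congr
      (Filter.Eventually.of_forall fun v => ?_)
    simp only [hK, Pi.add_apply, Pi.sub_apply, pow_one, pow_zero, one_mul]
    ring
  have intG : Integrable G := by
    have h1 := integrable_shiftpow_mul_normalPDF μs σs hσs 1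
    have h0 := integrable_shiftpow_mul_normalPDF μs σs hσs 0
    refine ((h1.add (h0.const_mul μs))).congr (Filter.Eventually.of_forall fun v => ?_)
    simp only [hG, Pi.add_apply, Pi.sub_apply, pow_one, pow_zero, one_mul]
    ring
  have intH : Integrable H := by
    have h1 := integrable_shiftpow_mul_normalPDF μt σt hσt 1
    have h0 := integrable_shiftpow_mul_normalPDF μt σt hσt 0
    refine ((h1.add (h0.const_mul μt))).congr (Filter.Eventually.of_forall fun u => ?_)
    simp only [hH, Pi.add_apply, Pi.sub_apply, pow_one, pow_zero, one_mul]
    ring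
  -- rewrite the integrand
  have heq : ∀ p : ℝ × ℝ,
      (p.1 ^ 2 * p.2 - p.2 ^ 2 * p.1 - p.1 * p.2 * (∑ i, (xt i - xs i) * β i)
        - (p.2 * σt ^ 2 - p.1 * σs ^ 2))
        * (normalPDF μt σt p.1 * normalPDF μs σs p.2)
      = F p.1 * G p.2 - H p.1 * K p.2 := by
    intro p
    rw [hdiff]
    simp only [hF, hG, hH, hK]
    ring
  have i1 : IntegrableOn (fun p : ℝ × ℝ => F p.1 * G p.2)
      (Set.Ioi (0 : ℝ) ×ˢ Set.Ioi (0 : ℝ)) ((volume : Measure ℝ).prod volume) :=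
    (intF.mul_prod intG).integrableOn
  have i2 : IntegrableOn (fun p : ℝ × ℝ => H p.1 * K p.2)
      (Set.Ioi (0 : ℝ) ×ˢ Set.Ioi (0 : ℝ)) ((volume : Measure ℝ).prod volume) :=
    (intH.mul_prod intK).integrableOn
  calc ∫ p in Set.Ioi (0 : ℝ) ×ˢ Set.Ioi (0 : ℝ),
        (p.1 ^ 2 * p.2 - p.2 ^ 2 * p.1 - p.1 * p.2 * (∑ i, (xt i - xs i) * β i)
          - (p.2 * σt ^ 2 - p.1 * σs ^ 2))
          * (normalPDF μt σt p.1 * normalPDF μs σs p.2)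
      = ∫ p in Set.Ioi (0 : ℝ) ×ˢ Set.Ioi (0 : ℝ),
          (F p.1 * G p.2 - H p.1 * K p.2) ∂((volume : Measure ℝ).prod volume) := by
        rw [← MeasureTheory.Measure.volume_eq_prod]
        exact integral_congr_ae (Filter.Eventually.of_forall fun p => heq p)
    _ = (∫ p in Set.Ioi (0 : ℝ) ×ˢ Set.Ioi (0 : ℝ),
          F p.1 * G p.2 ∂((volume : Measure ℝ).prod volume))
        - ∫ p in Set.Ioi (0 : ℝ) ×ˢ Set.Ioi (0 : ℝ),
          H p.1 * K p.2 ∂((volume : Measure ℝ).prod volume) := integral_sub i1 i2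
    _ = (∫ u in Set.Ioi (0 : ℝ), F u) * (∫ v in Set.Ioi (0 : ℝ), G v)
        - (∫ u in Set.Ioi (0 : ℝ), H u) * ∫ v in Set.Ioi (0 : ℝ), K v := by
        rw [setIntegral_prod_mul, setIntegral_prod_mul]
    _ = 0 := by
        rw [show (∫ u in Set.Ioi (0 : ℝ), F u) = 0 from key_integral μt σt hσt,
          show (∫ v in Set.Ioi (0 : ℝ), K v) = 0 from key_integral μs σs hσs]
        ring
end

section
/- Let n ≥ 1, x_t, x_s, β ∈ ℝⁿ, α ∈ ℝ, and σ > 0. Let U_t = x_t'β + α + ε_t and U_s = x_s'β + α + ε_s, where ε_t and ε_s are independent, each distributed N(0, σ²). Then E[(U_t²U_s − U_s²U_t − U_tU_s·(x_t − x_s)'β + (U_t − U_s)·σ²)·1{U_t>0, U_s>0}] = 0. -/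
open MeasureTheory Real Set Filter

lemma normalPDF_pos (μ σ u : ℝ) (hσ : 0 < σ) : 0 < normalPDF μ σ u := by
  unfold normalPDF
  have := Real.sqrt_pos.mpr (by positivity : (0:ℝ) < 2 * Real.pi)
  positivity

lemma integrable_pow_mul_normalPDF (μ σ : ℝ) (hσ : 0 < σ) (k : ℕ) :
    Integrable (fun u : ℝ => u ^ k * normalPDF μ σ u) := by
  have hb : (0:ℝ) < 1/(8*σ^2) := by positivity
  set c0 : ℝ := 1 / (σ * Real.sqrt (2 * Real.pi)) with hc0
  have hc0pos : 0 < c0 := by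
    have := Real.sqrt_pos.mpr (by positivity : (0:ℝ) < 2 * Real.pi)
    positivity
  set C : ℝ := c0 * Real.exp (μ^2/(2*σ^2)) * (1 + (8*σ^2)^k * k.factorial) with hC
  apply Integrable.mono' (((integrable_exp_neg_mul_sq hb).const_mul C))
  · exact (Continuous.mul (continuous_pow k) (by unfold normalPDF; continuity)).aestronglyMeasurable
  · filter_upwards with u
    have hu2k : (0:ℝ) ≤ u^(2*k) := by rw [pow_mul]; positivity
    have h1 : Real.exp (-(u - μ) ^ 2 / (2 * σ ^ 2)) ≤
        Real.exp (μ^2/(2*σ^2)) * Real.exp (-(u^2)/(4*σ^2)) := by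
      rw [← Real.exp_add]
      apply Real.exp_le_exp.mpr
      have heq : μ ^ 2 / (2 * σ ^ 2) + -u ^ 2 / (4 * σ ^ 2) - (-(u - μ) ^ 2 / (2 * σ ^ 2))
          = (u - 2*μ)^2/(4*σ^2) := by
        field_simp
        ring
      have : (0:ℝ) ≤ (u - 2*μ)^2/(4*σ^2) := by positivity
      linarith [heq ▸ this]
    have h2 : |u|^k ≤ 1 + u^(2*k) := by
      rcases le_or_gt (|u|) 1 with h | h
      · have : |u|^k ≤ 1 := pow_le_one₀ (abs_nonneg u) h
        linarith
      · have h1' : |u|^k ≤ |u|^(2*k) := pow_le_pow_right₀ h.le (by omega)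
        have h2' : |u|^(2*k) = u^(2*k) := by rw [← abs_pow, abs_of_nonneg hu2k]
        linarith [h2' ▸ h1']
    have h3 : u^(2*k) * Real.exp (-(u^2)/(8*σ^2)) ≤ (8*σ^2)^k * k.factorial := by
      have hy : (0:ℝ) ≤ u^2/(8*σ^2) := by positivity
      have hle := Real.pow_div_factorial_le_exp (u^2/(8*σ^2)) hy k
      have hkf : (0:ℝ) < k.factorial := by positivity
      have h4 : (u^2/(8*σ^2))^k ≤ k.factorial * Real.exp (u^2/(8*σ^2)) := by
        rw [div_le_iff₀ hkf] at hle
        linarith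
      have hpow : u^(2*k) = (8*σ^2)^k * (u^2/(8*σ^2))^k := by
        rw [← mul_pow, pow_mul]
        congr 1
        field_simp
      calc u^(2*k) * Real.exp (-(u^2)/(8*σ^2))
          = (8*σ^2)^k * (u^2/(8*σ^2))^k * Real.exp (-(u^2)/(8*σ^2)) := by rw [hpow]
        _ ≤ (8*σ^2)^k * (k.factorial * Real.exp (u^2/(8*σ^2))) * Real.exp (-(u^2)/(8*σ^2)) := by
            apply mul_le_mul_of_nonneg_right _ (Real.exp_nonneg _)
            exact mul_le_mul_of_nonneg_left h4 (by positivity)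
        _ = (8*σ^2)^k * k.factorial * Real.exp (u^2/(8*σ^2) + -(u^2)/(8*σ^2)) := by
            rw [Real.exp_add]; ring
        _ = (8*σ^2)^k * k.factorial := by
            rw [show u^2/(8*σ^2) + -(u^2)/(8*σ^2) = 0 by ring, Real.exp_zero, mul_one]
    have h5 : Real.exp (-(u^2)/(4*σ^2)) ≤ Real.exp (-(u^2)/(8*σ^2)) := by
      apply Real.exp_le_exp.mpr
      have h6 : (0:ℝ) ≤ u^2/(8*σ^2) := by positivity
      have : -(u^2)/(4*σ^2) = -(u^2)/(8*σ^2) - u^2/(8*σ^2) := by ring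
      linarith
    have h6 : u^(2*k) * Real.exp (-(u^2)/(4*σ^2))
        ≤ (8*σ^2)^k * k.factorial * Real.exp (-(u^2)/(8*σ^2)) := by
      calc u^(2*k) * Real.exp (-(u^2)/(4*σ^2))
          = (u^(2*k) * Real.exp (-(u^2)/(8*σ^2))) * Real.exp (-(u^2)/(8*σ^2)) := by
            rw [mul_assoc, ← Real.exp_add]
            congr 2
            ring
        _ ≤ (8*σ^2)^k * k.factorial * Real.exp (-(u^2)/(8*σ^2)) :=
            mul_le_mul_of_nonneg_right h3 (Real.exp_nonneg _)
    have hnorm : ‖u ^ k * normalPDF μ σ u‖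
        = |u|^k * (c0 * Real.exp (-(u - μ) ^ 2 / (2 * σ ^ 2))) := by
      rw [norm_mul, norm_pow, Real.norm_eq_abs, Real.norm_eq_abs,
        abs_of_pos (normalPDF_pos μ σ u hσ)]
      rfl
    rw [hnorm]
    calc |u|^k * (c0 * Real.exp (-(u - μ) ^ 2 / (2 * σ ^ 2)))
        ≤ (1 + u^(2*k)) * (c0 * (Real.exp (μ^2/(2*σ^2)) * Real.exp (-(u^2)/(4*σ^2)))) := by
          apply mul_le_mul h2 (mul_le_mul_of_nonneg_left h1 hc0pos.le) (by positivity)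
            (by positivity)
      _ = c0 * Real.exp (μ^2/(2*σ^2)) *
            (Real.exp (-(u^2)/(4*σ^2)) + u^(2*k) * Real.exp (-(u^2)/(4*σ^2))) := by ring
      _ ≤ c0 * Real.exp (μ^2/(2*σ^2)) *
            (Real.exp (-(u^2)/(8*σ^2)) + (8*σ^2)^k * k.factorial * Real.exp (-(u^2)/(8*σ^2))) := by
          exact mul_le_mul_of_nonneg_left (add_le_add h5 h6) (by positivity)
      _ = C * Real.exp (-(1/(8*σ^2)) * u^2) := by
          rw [show -(1/(8*σ^2)) * u^2 = -(u^2)/(8*σ^2) by ring, hC]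
          ring

lemma integrable_normalPDF (μ σ : ℝ) (hσ : 0 < σ) : Integrable (normalPDF μ σ) := by
  simpa using integrable_pow_mul_normalPDF μ σ hσ 0

lemma integrable_id_mul_normalPDF (μ σ : ℝ) (hσ : 0 < σ) :
    Integrable (fun u : ℝ => u * normalPDF μ σ u) := by
  simpa using integrable_pow_mul_normalPDF μ σ hσ 1

lemma tendsto_id_mul_normalPDF (μ σ : ℝ) (hσ : 0 < σ) :
    Tendsto (fun u : ℝ => u * normalPDF μ σ u) atTop (nhds 0) := by
  have hb : (0:ℝ) < 1/(2*σ^2) := by positivity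
  set c0 : ℝ := 1 / (σ * Real.sqrt (2 * Real.pi)) with hc0
  have h1 : Tendsto (fun x : ℝ => x * Real.exp (-(1/(2*σ^2)) * x^2)) atTop (nhds 0) := by
    have ho := rpow_mul_exp_neg_mul_sq_isLittleO_exp_neg hb 1
    have ho2 : (fun x : ℝ => x * Real.exp (-(1/(2*σ^2)) * x^2))
        =o[atTop] fun x => Real.exp (-(1/2) * x) := by
      refine ho.congr' ?_ EventuallyEq.rfl
      filter_upwards [eventually_gt_atTop (0:ℝ)] with x hx
      rw [Real.rpow_one]
    refine ho2.isBigO.trans_tendsto ?_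
    exact Real.tendsto_exp_atBot.comp (tendsto_id.const_mul_atTop_of_neg (by norm_num))
  have h2 : Tendsto (fun x : ℝ => Real.exp (-(1/(2*σ^2)) * x^2)) atTop (nhds 0) := by
    refine Real.tendsto_exp_atBot.comp ?_
    exact (tendsto_pow_atTop (two_ne_zero)).const_mul_atTop_of_neg (neg_neg_of_pos (by positivity))
  have h3 : Tendsto (fun x : ℝ => c0 * ((x + μ) * Real.exp (-(1/(2*σ^2)) * x^2)))
      atTop (nhds 0) := by
    have := ((h1.add (h2.const_mul μ)).const_mul c0)
    simpa [mul_add, add_mul, mul_comm, mul_assoc, mul_left_comm] using this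
  have h4 : Tendsto (fun u : ℝ => u - μ) atTop atTop :=
    tendsto_atTop_add_const_right atTop (-μ) tendsto_id
  have h5 := h3.comp h4
  refine h5.congr fun u => ?_
  unfold normalPDF
  rw [Function.comp]
  rw [show u - μ + μ = u by ring]
  rw [show -(1/(2*σ^2)) * (u - μ)^2 = -(u - μ)^2 / (2*σ^2) by ring]
  ring

lemma integral_deriv_id_mul_normalPDF (μ σ : ℝ) (hσ : 0 < σ) :
    ∫ u in Set.Ioi (0:ℝ),
      (normalPDF μ σ u + μ/σ^2 * (u * normalPDF μ σ u) - 1/σ^2 * (u^2 * normalPDF μ σ u)) = 0 := by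
  have hσ2 : (σ:ℝ)^2 ≠ 0 := by positivity
  have hderiv : ∀ x ∈ Set.Ici (0:ℝ), HasDerivAt (fun u : ℝ => u * normalPDF μ σ u)
      (normalPDF μ σ x + μ/σ^2 * (x * normalPDF μ σ x) - 1/σ^2 * (x^2 * normalPDF μ σ x)) x := by
    intro x _
    have hg : HasDerivAt (fun u : ℝ => -(u - μ)^2 / (2*σ^2)) (-(x - μ)/σ^2) x := by
      have h1 : HasDerivAt (fun u : ℝ => u - μ) 1 x := (hasDerivAt_id x).sub_const μ
      have h2 := ((h1.pow 2).neg).div_const (2*σ^2)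
      refine h2.congr_deriv ?_
      field_simp
      ring
    have hexp : HasDerivAt (fun u : ℝ => Real.exp (-(u - μ)^2 / (2*σ^2)))
        (Real.exp (-(x - μ)^2 / (2*σ^2)) * (-(x - μ)/σ^2)) x := hg.exp
    have hf : HasDerivAt (normalPDF μ σ)
        ((1 / (σ * Real.sqrt (2 * Real.pi))) * (Real.exp (-(x - μ)^2 / (2*σ^2)) * (-(x - μ)/σ^2)))
        x := hexp.const_mul _
    have := (hasDerivAt_id x).mul hf
    refine this.congr_deriv ?_
    simp only [id]
    unfold normalPDF
    field_simp
    ring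
  have hint : IntegrableOn (fun x : ℝ =>
      (normalPDF μ σ x + μ/σ^2 * (x * normalPDF μ σ x) - 1/σ^2 * (x^2 * normalPDF μ σ x)))
      (Set.Ioi 0) := by
    exact (((integrable_normalPDF μ σ hσ).add
      ((integrable_id_mul_normalPDF μ σ hσ).const_mul _)).sub
      ((integrable_pow_mul_normalPDF μ σ hσ 2).const_mul _)).integrableOn
  have := integral_Ioi_of_hasDerivAt_of_tendsto' hderiv hint (tendsto_id_mul_normalPDF μ σ hσ)
  simpa using this

lemma moment_identity (μ σ : ℝ) (hσ : 0 < σ) :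
    ∫ u in Set.Ioi (0:ℝ), u^2 * normalPDF μ σ u
      = μ * (∫ u in Set.Ioi (0:ℝ), u * normalPDF μ σ u)
        + σ^2 * (∫ u in Set.Ioi (0:ℝ), normalPDF μ σ u) := by
  have hσ2 : (σ:ℝ)^2 ≠ 0 := by positivity
  have h0 := integral_deriv_id_mul_normalPDF μ σ hσ
  rw [integral_sub, integral_add, integral_const_mul, integral_const_mul] at h0
  · field_simp at h0
    linarith
  · exact (integrable_normalPDF μ σ hσ).integrableOn
  · exact ((integrable_id_mul_normalPDF μ σ hσ).const_mul _).integrableOn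
  · exact ((integrable_normalPDF μ σ hσ).add
      ((integrable_id_mul_normalPDF μ σ hσ).const_mul _)).integrableOn
  · exact ((integrable_pow_mul_normalPDF μ σ hσ 2).const_mul _).integrableOn

/-- Moment condition (Estm_h1) for the fixed-effects panel Tobit model with an
individual-specific error variance: with `U_t ~ N(x_t'β + α, σ²)` and
`U_s ~ N(x_s'β + α, σ²)` independent,
`E[(U_t²U_s − U_s²U_t − U_tU_s(x_t − x_s)'β + (U_t − U_s)σ²)·1{U_t>0,U_s>0}] = 0`. -/
theorem panel_tobit_individual_variance_moment (n : ℕ) (hn : 1 ≤ n)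
    (xt xs β : Fin n → ℝ) (α : ℝ) (σ : ℝ) (hσ : 0 < σ) :
    ∫ p in Set.Ioi (0 : ℝ) ×ˢ Set.Ioi (0 : ℝ),
        (p.1 ^ 2 * p.2 - p.2 ^ 2 * p.1
            - p.1 * p.2 * (∑ i, (xt i - xs i) * β i)
            + (p.1 - p.2) * σ ^ 2)
          * (normalPDF (∑ i, xt i * β i + α) σ p.1
              * normalPDF (∑ i, xs i * β i + α) σ p.2) = 0 := by
  set μt : ℝ := ∑ i, xt i * β i + α with hμt
  set μs : ℝ := ∑ i, xs i * β i + α with hμs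
  have hc : ∑ i, (xt i - xs i) * β i = μt - μs := by
    rw [hμt, hμs]
    simp only [sub_mul]
    rw [Finset.sum_sub_distrib]
    ring
  rw [hc]
  rw [Measure.volume_eq_prod, ← Measure.prod_restrict]
  have heq : (fun p : ℝ × ℝ =>
      (p.1 ^ 2 * p.2 - p.2 ^ 2 * p.1 - p.1 * p.2 * (μt - μs) + (p.1 - p.2) * σ ^ 2)
        * (normalPDF μt σ p.1 * normalPDF μs σ p.2))
      = fun p : ℝ × ℝ =>
        (p.1^2 * normalPDF μt σ p.1) * (p.2 * normalPDF μs σ p.2)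
        - (p.1 * normalPDF μt σ p.1) * (p.2^2 * normalPDF μs σ p.2)
        - (μt - μs) * ((p.1 * normalPDF μt σ p.1) * (p.2 * normalPDF μs σ p.2))
        + σ^2 * ((p.1 * normalPDF μt σ p.1) * (normalPDF μs σ p.2))
        - σ^2 * ((normalPDF μt σ p.1) * (p.2 * normalPDF μs σ p.2)) := by
    funext p
    ring
  rw [heq]
  have I2t := (integrable_pow_mul_normalPDF μt σ hσ 2).restrict (s := Set.Ioi 0)
  have I1t := (integrable_id_mul_normalPDF μt σ hσ).restrict (s := Set.Ioi 0)
  have I0t := (integrable_normalPDF μt σ hσ).restrict (s := Set.Ioi 0)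
  have I2s := (integrable_pow_mul_normalPDF μs σ hσ 2).restrict (s := Set.Ioi 0)
  have I1s := (integrable_id_mul_normalPDF μs σ hσ).restrict (s := Set.Ioi 0)
  have I0s := (integrable_normalPDF μs σ hσ).restrict (s := Set.Ioi 0)
  have P1 := I2t.mul_prod I1s
  have P2 := I1t.mul_prod I2s
  have P3 := (I1t.mul_prod I1s).const_mul (μt - μs)
  have P4 := (I1t.mul_prod I0s).const_mul (σ^2)
  have P5 := (I0t.mul_prod I1s).const_mul (σ^2)
  have Q2 : Integrable (fun p : ℝ × ℝ =>
      (p.1^2 * normalPDF μt σ p.1) * (p.2 * normalPDF μs σ p.2)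
      - (p.1 * normalPDF μt σ p.1) * (p.2^2 * normalPDF μs σ p.2))
      ((volume.restrict (Set.Ioi 0)).prod (volume.restrict (Set.Ioi 0))) := P1.sub P2
  have Q3 : Integrable (fun p : ℝ × ℝ =>
      (p.1^2 * normalPDF μt σ p.1) * (p.2 * normalPDF μs σ p.2)
      - (p.1 * normalPDF μt σ p.1) * (p.2^2 * normalPDF μs σ p.2)
      - (μt - μs) * ((p.1 * normalPDF μt σ p.1) * (p.2 * normalPDF μs σ p.2)))
      ((volume.restrict (Set.Ioi 0)).prod (volume.restrict (Set.Ioi 0))) := Q2.sub P3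
  have Q4 : Integrable (fun p : ℝ × ℝ =>
      (p.1^2 * normalPDF μt σ p.1) * (p.2 * normalPDF μs σ p.2)
      - (p.1 * normalPDF μt σ p.1) * (p.2^2 * normalPDF μs σ p.2)
      - (μt - μs) * ((p.1 * normalPDF μt σ p.1) * (p.2 * normalPDF μs σ p.2))
      + σ^2 * ((p.1 * normalPDF μt σ p.1) * (normalPDF μs σ p.2)))
      ((volume.restrict (Set.Ioi 0)).prod (volume.restrict (Set.Ioi 0))) := Q3.add P4
  rw [integral_sub Q4 P5,
    integral_add Q3 P4,
    integral_sub Q2 P3,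
    integral_sub P1 P2,
    integral_const_mul, integral_const_mul, integral_const_mul]
  have E1 : (∫ p : ℝ × ℝ, (p.1^2 * normalPDF μt σ p.1) * (p.2 * normalPDF μs σ p.2)
      ∂((volume.restrict (Set.Ioi 0)).prod (volume.restrict (Set.Ioi 0))))
      = (∫ u in Set.Ioi (0:ℝ), u^2 * normalPDF μt σ u)
        * (∫ v in Set.Ioi (0:ℝ), v * normalPDF μs σ v) := integral_prod_mul (fun u : ℝ => u^2 * normalPDF μt σ u) (fun v : ℝ => v * normalPDF μs σ v)
  have E2 : (∫ p : ℝ × ℝ, (p.1 * normalPDF μt σ p.1) * (p.2^2 * normalPDF μs σ p.2)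
      ∂((volume.restrict (Set.Ioi 0)).prod (volume.restrict (Set.Ioi 0))))
      = (∫ u in Set.Ioi (0:ℝ), u * normalPDF μt σ u)
        * (∫ v in Set.Ioi (0:ℝ), v^2 * normalPDF μs σ v) := integral_prod_mul (fun u : ℝ => u * normalPDF μt σ u) (fun v : ℝ => v^2 * normalPDF μs σ v)
  have E3 : (∫ p : ℝ × ℝ, (p.1 * normalPDF μt σ p.1) * (p.2 * normalPDF μs σ p.2)
      ∂((volume.restrict (Set.Ioi 0)).prod (volume.restrict (Set.Ioi 0))))
      = (∫ u in Set.Ioi (0:ℝ), u * normalPDF μt σ u)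
        * (∫ v in Set.Ioi (0:ℝ), v * normalPDF μs σ v) := integral_prod_mul (fun u : ℝ => u * normalPDF μt σ u) (fun v : ℝ => v * normalPDF μs σ v)
  have E4 : (∫ p : ℝ × ℝ, (p.1 * normalPDF μt σ p.1) * (normalPDF μs σ p.2)
      ∂((volume.restrict (Set.Ioi 0)).prod (volume.restrict (Set.Ioi 0))))
      = (∫ u in Set.Ioi (0:ℝ), u * normalPDF μt σ u)
        * (∫ v in Set.Ioi (0:ℝ), normalPDF μs σ v) := integral_prod_mul (fun u : ℝ => u * normalPDF μt σ u) (fun v : ℝ => normalPDF μs σ v)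
  have E5 : (∫ p : ℝ × ℝ, (normalPDF μt σ p.1) * (p.2 * normalPDF μs σ p.2)
      ∂((volume.restrict (Set.Ioi 0)).prod (volume.restrict (Set.Ioi 0))))
      = (∫ u in Set.Ioi (0:ℝ), normalPDF μt σ u)
        * (∫ v in Set.Ioi (0:ℝ), v * normalPDF μs σ v) := integral_prod_mul (fun u : ℝ => normalPDF μt σ u) (fun v : ℝ => v * normalPDF μs σ v)
  rw [E1, E2, E3, E4, E5]
  have kt := moment_identity μt σ hσ
  have ks := moment_identity μs σ hσ
  rw [kt, ks]
  ring
end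

section
/- Let n ≥ 1, x_t, x_s, x_τ, β ∈ ℝⁿ, α ∈ ℝ, and σ > 0. Let U_r = x_r'β + α + ε_r for r ∈ {t, s, τ}, where ε_t, ε_s, ε_τ are independent, each distributed N(0, σ²). Then E[((U_t²U_s − U_s²U_t) + (U_s²U_τ − U_τ²U_s) + (U_τ²U_t − U_t²U_τ) − U_tU_s·(x_t − x_s)'β − U_sU_τ·(x_s − x_τ)'β − U_τU_t·(x_τ − x_t)'β)·1{U_t>0, U_s>0, U_τ>0}] = 0. -/
open MeasureTheory

namespace PanelTobitAux

open Real Set Filter Topology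

lemma integrable_pow_mul_exp_neg_mul_sq' (k : ℕ) {b : ℝ} (hb : 0 < b) :
    Integrable (fun x : ℝ => x ^ k * Real.exp (-b * x ^ 2)) := by
  have h := integrable_rpow_mul_exp_neg_mul_sq hb (s := (k : ℝ))
    (lt_of_lt_of_le (by norm_num) (Nat.cast_nonneg k))
  simpa [Real.rpow_natCast] using h

lemma integrable_pow_mul_normalPDF (k : ℕ) (μ : ℝ) {σ : ℝ} (hσ : 0 < σ) :
    Integrable (fun x : ℝ => x ^ k * normalPDF μ σ x) := by
  have hb : 0 < (2 * σ ^ 2)⁻¹ := by positivity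
  have h1 : Integrable (fun y : ℝ => (y + μ) ^ k * Real.exp (-(2 * σ ^ 2)⁻¹ * y ^ 2)) := by
    have heq : (fun y : ℝ => (y + μ) ^ k * Real.exp (-(2 * σ ^ 2)⁻¹ * y ^ 2))
        = fun y : ℝ => ∑ i ∈ Finset.range (k + 1),
            (y ^ i * Real.exp (-(2 * σ ^ 2)⁻¹ * y ^ 2)) * (μ ^ (k - i) * (k.choose i : ℝ)) := by
      funext y
      rw [add_pow, Finset.sum_mul]
      refine Finset.sum_congr rfl fun i _ => by ring
    rw [heq]
    exact integrable_finset_sum _ fun i _ =>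
      (integrable_pow_mul_exp_neg_mul_sq' i hb).mul_const _
  have h2 := h1.comp_sub_right μ
  have heq2 : (fun x : ℝ => x ^ k * normalPDF μ σ x)
      = fun x : ℝ => (1 / (σ * Real.sqrt (2 * Real.pi))) *
          ((x - μ + μ) ^ k * Real.exp (-(2 * σ ^ 2)⁻¹ * (x - μ) ^ 2)) := by
    funext x
    rw [normalPDF, show -(2 * σ ^ 2)⁻¹ * (x - μ) ^ 2 = -(x - μ) ^ 2 / (2 * σ ^ 2) by ring]
    ring
  rw [heq2]
  exact h2.const_mul _

lemma hasDerivAt_aux (μ : ℝ) {σ : ℝ} (hσ : 0 < σ) (u : ℝ) :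
    HasDerivAt (fun u : ℝ => -σ ^ 2 * u * normalPDF μ σ u)
      ((u ^ 2 - μ * u - σ ^ 2) * normalPDF μ σ u) u := by
  have hinner : HasDerivAt (fun u : ℝ => -(u - μ) ^ 2 / (2 * σ ^ 2)) (-(u - μ) / σ ^ 2) u := by
    have h1 : HasDerivAt (fun u : ℝ => u - μ) 1 u := (hasDerivAt_id u).sub_const μ
    have h2 := ((h1.pow 2).neg).div_const (2 * σ ^ 2)
    refine h2.congr_deriv ?_
    field_simp
    ring
  have hpdf : HasDerivAt (fun u : ℝ => normalPDF μ σ u)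
      ((1 / (σ * Real.sqrt (2 * Real.pi))) *
        (Real.exp (-(u - μ) ^ 2 / (2 * σ ^ 2)) * (-(u - μ) / σ ^ 2))) u := by
    simpa [normalPDF, mul_comm, mul_assoc, mul_left_comm] using
      (hinner.exp.const_mul (1 / (σ * Real.sqrt (2 * Real.pi))))
  have hu : HasDerivAt (fun u : ℝ => -σ ^ 2 * u) (-σ ^ 2) u := by
    simpa using (hasDerivAt_id u).const_mul (-σ ^ 2)
  have h := hu.mul hpdf
  refine h.congr_deriv ?_
  simp only [normalPDF]
  have hσ' : σ ≠ 0 := hσ.ne'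
  field_simp
  ring

lemma tendsto_aux (μ : ℝ) {σ : ℝ} (hσ : 0 < σ) :
    Tendsto (fun u : ℝ => -σ ^ 2 * u * normalPDF μ σ u) atTop (𝓝 0) := by
  have hb : 0 < (2 * σ ^ 2)⁻¹ := by positivity
  set b : ℝ := (2 * σ ^ 2)⁻¹ with hbdef
  set C : ℝ := 1 / (σ * Real.sqrt (2 * Real.pi)) with hCdef
  have h1 : Tendsto (fun y : ℝ => y * Real.exp (-b * y ^ 2)) atTop (𝓝 0) := by
    have h := tendsto_rpow_abs_mul_exp_neg_mul_sq_cocompact hb 1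
    rw [cocompact_eq_atBot_atTop] at h
    have h' : Tendsto (fun y : ℝ => |y| ^ (1 : ℝ) * Real.exp (-b * y ^ 2)) atTop (𝓝 0) :=
      h.mono_left le_sup_right
    refine h'.congr' ?_
    filter_upwards [eventually_ge_atTop (0 : ℝ)] with y hy
    rw [Real.rpow_one, abs_of_nonneg hy]
  have h0 : Tendsto (fun y : ℝ => Real.exp (-b * y ^ 2)) atTop (𝓝 0) := by
    have hneg : Tendsto (fun y : ℝ => -b * y ^ 2) atTop atBot := by
      have := (tendsto_pow_atTop (two_ne_zero)).const_mul_atTop hb (f := fun y : ℝ => y ^ 2)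
      exact (tendsto_neg_atBot_iff.mpr this).congr fun y => by ring
    exact Real.tendsto_exp_atBot.comp hneg
  have hG : Tendsto (fun y : ℝ => -σ ^ 2 * (y + μ) * (C * Real.exp (-b * y ^ 2))) atTop (𝓝 0) := by
    have e1 : Tendsto (fun y : ℝ => (-σ ^ 2 * C) * (y * Real.exp (-b * y ^ 2))) atTop
        (𝓝 ((-σ ^ 2 * C) * 0)) := h1.const_mul _
    have e2 : Tendsto (fun y : ℝ => (-σ ^ 2 * μ * C) * Real.exp (-b * y ^ 2)) atTop
        (𝓝 ((-σ ^ 2 * μ * C) * 0)) := h0.const_mul _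
    rw [mul_zero] at e1 e2
    have := e1.add e2
    simp only [add_zero] at this
    exact this.congr fun y => by ring
  have hcomp : Tendsto (fun u : ℝ => u - μ) atTop atTop := by
    simpa [sub_eq_add_neg] using tendsto_atTop_add_const_right atTop (-μ) tendsto_id
  have := hG.comp hcomp
  refine this.congr fun u => ?_
  simp only [Function.comp_apply, normalPDF, hCdef]
  rw [show -b * (u - μ) ^ 2 = -(u - μ) ^ 2 / (2 * σ ^ 2) by rw [hbdef]; ring]
  ring

lemma moment_identity (μ : ℝ) {σ : ℝ} (hσ : 0 < σ) :
    ∫ u in Ioi (0 : ℝ), u ^ 2 * normalPDF μ σ u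
      = μ * (∫ u in Ioi (0 : ℝ), u * normalPDF μ σ u)
        + σ ^ 2 * (∫ u in Ioi (0 : ℝ), normalPDF μ σ u) := by
  have hint : ∀ k : ℕ, IntegrableOn (fun u : ℝ => u ^ k * normalPDF μ σ u) (Ioi 0) :=
    fun k => (integrable_pow_mul_normalPDF k μ hσ).integrableOn
  have hint1 : IntegrableOn (fun u : ℝ => u * normalPDF μ σ u) (Ioi 0) := by
    simpa using hint 1
  have hint0 : IntegrableOn (fun u : ℝ => normalPDF μ σ u) (Ioi 0) := by
    simpa using hint 0
  have hintc : IntegrableOn (fun u : ℝ => (u ^ 2 - μ * u - σ ^ 2) * normalPDF μ σ u) (Ioi 0) := by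
    refine (((hint 2).sub (hint1.const_mul μ)).sub (hint0.const_mul (σ ^ 2))).congr ?_
    exact ae_of_all _ fun u => by simp only [Pi.sub_apply]; ring
  have hder : ∫ u in Ioi (0 : ℝ), (u ^ 2 - μ * u - σ ^ 2) * normalPDF μ σ u = 0 := by
    have h := integral_Ioi_of_hasDerivAt_of_tendsto'
      (f := fun u : ℝ => -σ ^ 2 * u * normalPDF μ σ u)
      (f' := fun u : ℝ => (u ^ 2 - μ * u - σ ^ 2) * normalPDF μ σ u) (a := 0)
      (fun x _ => hasDerivAt_aux μ hσ x) hintc (tendsto_aux μ hσ)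
    simpa using h
  have e : ∫ u in Ioi (0 : ℝ), (u ^ 2 - μ * u - σ ^ 2) * normalPDF μ σ u
      = (∫ u in Ioi (0 : ℝ), u ^ 2 * normalPDF μ σ u)
        - μ * (∫ u in Ioi (0 : ℝ), u * normalPDF μ σ u)
        - σ ^ 2 * (∫ u in Ioi (0 : ℝ), normalPDF μ σ u) := by
    have hsub1 : IntegrableOn
        (fun u : ℝ => u ^ 2 * normalPDF μ σ u - μ * (u * normalPDF μ σ u)) (Ioi 0) :=
      (hint 2).sub (hint1.const_mul μ)
    rw [← integral_const_mul, ← integral_const_mul,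
      ← integral_sub (hint 2) (hint1.const_mul μ),
      ← integral_sub hsub1 (hint0.const_mul (σ ^ 2))]
    exact integral_congr_ae (ae_of_all _ fun u => by ring)
  linear_combination hder - e

lemma prod_term_integrable (μ1 μ2 μ3 : ℝ) {σ : ℝ} (hσ : 0 < σ) (k1 k2 k3 : ℕ) :
    Integrable (fun p : ℝ × ℝ × ℝ =>
        (p.1 ^ k1 * normalPDF μ1 σ p.1) *
          ((p.2.1 ^ k2 * normalPDF μ2 σ p.2.1) * (p.2.2 ^ k3 * normalPDF μ3 σ p.2.2)))
      ((volume.restrict (Ioi 0)).prod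
        ((volume.restrict (Ioi 0)).prod (volume.restrict (Ioi 0)))) :=
  ((integrable_pow_mul_normalPDF k1 μ1 hσ).integrableOn).mul_prod
    (((integrable_pow_mul_normalPDF k2 μ2 hσ).integrableOn).mul_prod
      ((integrable_pow_mul_normalPDF k3 μ3 hσ).integrableOn))

lemma prod_term_integral (μ1 μ2 μ3 : ℝ) (σ : ℝ) (k1 k2 k3 : ℕ) :
    ∫ p : ℝ × ℝ × ℝ,
        (p.1 ^ k1 * normalPDF μ1 σ p.1) *
          ((p.2.1 ^ k2 * normalPDF μ2 σ p.2.1) * (p.2.2 ^ k3 * normalPDF μ3 σ p.2.2))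
        ∂((volume.restrict (Ioi 0)).prod
            ((volume.restrict (Ioi 0)).prod (volume.restrict (Ioi 0))))
      = (∫ u in Ioi (0 : ℝ), u ^ k1 * normalPDF μ1 σ u) *
          ((∫ u in Ioi (0 : ℝ), u ^ k2 * normalPDF μ2 σ u) *
            (∫ u in Ioi (0 : ℝ), u ^ k3 * normalPDF μ3 σ u)) := by
  rw [integral_prod_mul (f := fun u : ℝ => u ^ k1 * normalPDF μ1 σ u)
    (g := fun q : ℝ × ℝ => (q.1 ^ k2 * normalPDF μ2 σ q.1) * (q.2 ^ k3 * normalPDF μ3 σ q.2)),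
    integral_prod_mul (f := fun u : ℝ => u ^ k2 * normalPDF μ2 σ u)
    (g := fun u : ℝ => u ^ k3 * normalPDF μ3 σ u)]

end PanelTobitAux

/-- Moment condition (Estm_h2) for the fixed-effects panel Tobit model with
individual-specific variance: with `U_r ~ N(x_r'β + α, σ²)`, `r ∈ {t, s, τ}`, independent,
the cyclic sum over three periods eliminates both `α` and `σ²`:
`E[((U_t²U_s − U_s²U_t) + (U_s²U_τ − U_τ²U_s) + (U_τ²U_t − U_t²U_τ)
   − U_tU_s(x_t − x_s)'β − U_sU_τ(x_s − x_τ)'β − U_τU_t(x_τ − x_t)'β)·1{U_t>0,U_s>0,U_τ>0}] = 0`. -/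
theorem panel_tobit_three_period_moment (n : ℕ) (hn : 1 ≤ n)
    (xt xs xτ β : Fin n → ℝ) (α : ℝ) (σ : ℝ) (hσ : 0 < σ) :
    ∫ p in Set.Ioi (0 : ℝ) ×ˢ (Set.Ioi (0 : ℝ) ×ˢ Set.Ioi (0 : ℝ)),
        ((p.1 ^ 2 * p.2.1 - p.2.1 ^ 2 * p.1)
            + (p.2.1 ^ 2 * p.2.2 - p.2.2 ^ 2 * p.2.1)
            + (p.2.2 ^ 2 * p.1 - p.1 ^ 2 * p.2.2)
            - p.1 * p.2.1 * (∑ i, (xt i - xs i) * β i)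
            - p.2.1 * p.2.2 * (∑ i, (xs i - xτ i) * β i)
            - p.2.2 * p.1 * (∑ i, (xτ i - xt i) * β i))
          * (normalPDF (∑ i, xt i * β i + α) σ p.1
              * (normalPDF (∑ i, xs i * β i + α) σ p.2.1
                  * normalPDF (∑ i, xτ i * β i + α) σ p.2.2)) = 0 := by
  classical
  open PanelTobitAux in
  set a : ℝ := ∑ i, xt i * β i + α with ha
  set b : ℝ := ∑ i, xs i * β i + α with hb
  set c : ℝ := ∑ i, xτ i * β i + α with hc
  have h12 : ∑ i, (xt i - xs i) * β i = a - b := by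
    simp only [ha, hb, sub_mul, Finset.sum_sub_distrib]; ring
  have h23 : ∑ i, (xs i - xτ i) * β i = b - c := by
    simp only [hb, hc, sub_mul, Finset.sum_sub_distrib]; ring
  have h31 : ∑ i, (xτ i - xt i) * β i = c - a := by
    simp only [hc, ha, sub_mul, Finset.sum_sub_distrib]; ring
  set ν : Measure ℝ := volume.restrict (Set.Ioi 0) with hν
  have hmeas : (volume : Measure (ℝ × ℝ × ℝ)).restrict
      (Set.Ioi (0 : ℝ) ×ˢ (Set.Ioi (0 : ℝ) ×ˢ Set.Ioi (0 : ℝ))) = ν.prod (ν.prod ν) := by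
    rw [MeasureTheory.Measure.volume_eq_prod, ← MeasureTheory.Measure.prod_restrict,
      MeasureTheory.Measure.volume_eq_prod, ← MeasureTheory.Measure.prod_restrict]
  rw [hmeas]
  -- base functions
  set M : Measure (ℝ × ℝ × ℝ) := ν.prod (ν.prod ν) with hM
  have base : ∀ k1 k2 k3 : ℕ, Integrable (fun p : ℝ × ℝ × ℝ =>
      (p.1 ^ k1 * normalPDF a σ p.1) *
        ((p.2.1 ^ k2 * normalPDF b σ p.2.1) * (p.2.2 ^ k3 * normalPDF c σ p.2.2))) M :=
    fun k1 k2 k3 => prod_term_integrable a b c hσ k1 k2 k3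
  have hI1 := (base 2 1 0).const_mul (1 : ℝ)
  have hI2 := (base 1 2 0).const_mul (-1 : ℝ)
  have hI3 := (base 0 2 1).const_mul (1 : ℝ)
  have hI4 := (base 0 1 2).const_mul (-1 : ℝ)
  have hI5 := (base 1 0 2).const_mul (1 : ℝ)
  have hI6 := (base 2 0 1).const_mul (-1 : ℝ)
  have hI7 := (base 1 1 0).const_mul (-(a - b))
  have hI8 := (base 0 1 1).const_mul (-(b - c))
  have hI9 := (base 1 0 1).const_mul (-(c - a))
  rw [show (∫ (p : ℝ × ℝ × ℝ),
      ((p.1 ^ 2 * p.2.1 - p.2.1 ^ 2 * p.1)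
          + (p.2.1 ^ 2 * p.2.2 - p.2.2 ^ 2 * p.2.1)
          + (p.2.2 ^ 2 * p.1 - p.1 ^ 2 * p.2.2)
          - p.1 * p.2.1 * (∑ i, (xt i - xs i) * β i)
          - p.2.1 * p.2.2 * (∑ i, (xs i - xτ i) * β i)
          - p.2.2 * p.1 * (∑ i, (xτ i - xt i) * β i))
        * (normalPDF a σ p.1 * (normalPDF b σ p.2.1 * normalPDF c σ p.2.2)) ∂M)
      = ∫ (p : ℝ × ℝ × ℝ),
        (1 : ℝ) * ((p.1 ^ 2 * normalPDF a σ p.1) * ((p.2.1 ^ 1 * normalPDF b σ p.2.1) * (p.2.2 ^ 0 * normalPDF c σ p.2.2))) + ((-1 : ℝ) * ((p.1 ^ 1 * normalPDF a σ p.1) * ((p.2.1 ^ 2 * normalPDF b σ p.2.1) * (p.2.2 ^ 0 * normalPDF c σ p.2.2))) + ((1 : ℝ) * ((p.1 ^ 0 * normalPDF a σ p.1) * ((p.2.1 ^ 2 * normalPDF b σ p.2.1) * (p.2.2 ^ 1 * normalPDF c σ p.2.2))) + ((-1 : ℝ) * ((p.1 ^ 0 * normalPDF a σ p.1) * ((p.2.1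 ^ 1 * normalPDF b σ p.2.1) * (p.2.2 ^ 2 * normalPDF c σ p.2.2))) + ((1 : ℝ) * ((p.1 ^ 1 * normalPDF a σ p.1) * ((p.2.1 ^ 0 * normalPDF b σ p.2.1) * (p.2.2 ^ 2 * normalPDF c σ p.2.2))) + ((-1 : ℝ) * ((p.1 ^ 2 * normalPDF a σ p.1) * ((p.2.1 ^ 0 * normalPDF b σ p.2.1) * (p.2.2 ^ 1 * normalPDF c σ p.2.2))) + ((-(a - b)) * ((p.1 ^ 1 * normalPDF a σ p.1) * ((p.2.1 ^ 1 * normalPDF b σ p.2.1) * (p.2.2 ^ 0 * normalPDF c σ p.2.2))) + ((-(b - c)) * ((p.1 ^ 0 * normalPDF a σ p.1) * ((p.2.1 ^ 1 * normalPDF b σ p.2.1) * (p.2.2 ^ 1 * normalPDF c σ p.2.2))) + ((-(c - a)) * ((p.1 ^ 1 * normalPDF a σ p.1) * ((p.2.1 ^ 0 * normalPDF b σ p.2.1) * (p.2.2 ^ 1 * normalPDF c σ p.2.2))))))))))) ∂M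
    from integral_congr_ae (ae_of_all _ fun p => by rw [h12, h23, h31]; ring)]
  have hS9 : Integrable (fun p : ℝ × ℝ × ℝ => (-(c - a)) * ((p.1 ^ 1 * normalPDF a σ p.1) * ((p.2.1 ^ 0 * normalPDF b σ p.2.1) * (p.2.2 ^ 1 * normalPDF c σ p.2.2)))) M := hI9
  have hS8 : Integrable (fun p : ℝ × ℝ × ℝ => (-(b - c)) * ((p.1 ^ 0 * normalPDF a σ p.1) * ((p.2.1 ^ 1 * normalPDF b σ p.2.1) * (p.2.2 ^ 1 * normalPDF c σ p.2.2))) + ((-(c - a)) * ((p.1 ^ 1 * normalPDF a σ p.1) * ((p.2.1 ^ 0 * normalPDF b σ p.2.1) * (p.2.2 ^ 1 * normalPDF c σ p.2.2))))) M := hI8.add hS9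
  have hS7 : Integrable (fun p : ℝ × ℝ × ℝ => (-(a - b)) * ((p.1 ^ 1 * normalPDF a σ p.1) * ((p.2.1 ^ 1 * normalPDF b σ p.2.1) * (p.2.2 ^ 0 * normalPDF c σ p.2.2))) + ((-(b - c)) * ((p.1 ^ 0 * normalPDF a σ p.1) * ((p.2.1 ^ 1 * normalPDF b σ p.2.1) * (p.2.2 ^ 1 * normalPDF c σ p.2.2))) + ((-(c - a)) * ((p.1 ^ 1 * normalPDF a σ p.1) * ((p.2.1 ^ 0 * normalPDF b σ p.2.1) * (p.2.2 ^ 1 * normalPDF c σ p.2.2)))))) M := hI7.add hS8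
  have hS6 : Integrable (fun p : ℝ × ℝ × ℝ => (-1 : ℝ) * ((p.1 ^ 2 * normalPDF a σ p.1) * ((p.2.1 ^ 0 * normalPDF b σ p.2.1) * (p.2.2 ^ 1 * normalPDF c σ p.2.2))) + ((-(a - b)) * ((p.1 ^ 1 * normalPDF a σ p.1) * ((p.2.1 ^ 1 * normalPDF b σ p.2.1) * (p.2.2 ^ 0 * normalPDF c σ p.2.2))) + ((-(b - c)) * ((p.1 ^ 0 * normalPDF a σ p.1) * ((p.2.1 ^ 1 * normalPDF b σ p.2.1) * (p.2.2 ^ 1 * normalPDF c σ p.2.2))) + ((-(c - a)) * ((p.1 ^ 1 * normalPDF a σ p.1) * ((p.2.1 ^ 0 * normalPDF b σ p.2.1) * (p.2.2 ^ 1 * normalPDF c σ p.2.2))))))) M := hI6.add hS7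
  have hS5 : Integrable (fun p : ℝ × ℝ × ℝ => (1 : ℝ) * ((p.1 ^ 1 * normalPDF a σ p.1) * ((p.2.1 ^ 0 * normalPDF b σ p.2.1) * (p.2.2 ^ 2 * normalPDF c σ p.2.2))) + ((-1 : ℝ) * ((p.1 ^ 2 * normalPDF a σ p.1) * ((p.2.1 ^ 0 * normalPDF b σ p.2.1) * (p.2.2 ^ 1 * normalPDF c σ p.2.2))) + ((-(a - b)) * ((p.1 ^ 1 * normalPDF a σ p.1) * ((p.2.1 ^ 1 * normalPDF b σ p.2.1) * (p.2.2 ^ 0 * normalPDF c σ p.2.2))) + ((-(b - c)) * ((p.1 ^ 0 * normalPDF a σ p.1) * ((p.2.1 ^ 1 * normalPDF b σ p.2.1) * (p.2.2 ^ 1 * normalPDF c σ p.2.2))) + ((-(c - a)) * ((p.1 ^ 1 * normalPDF a σ p.1) * ((p.2.1 ^ 0 * normalPDF b σ p.2.1) * (p.2.2 ^ 1 * normalPDF c σ p.2.2)))))))) M := hI5.add hS6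
  have hS4 : Integrable (fun p : ℝ × ℝ × ℝ => (-1 : ℝ) * ((p.1 ^ 0 * normalPDF a σ p.1) * ((p.2.1 ^ 1 * normalPDF b σ p.2.1) * (p.2.2 ^ 2 * normalPDF c σ p.2.2))) + ((1 : ℝ) * ((p.1 ^ 1 * normalPDF a σ p.1) * ((p.2.1 ^ 0 * normalPDF b σ p.2.1) * (p.2.2 ^ 2 * normalPDF c σ p.2.2))) + ((-1 : ℝ) * ((p.1 ^ 2 * normalPDF a σ p.1) * ((p.2.1 ^ 0 * normalPDF b σ p.2.1) * (p.2.2 ^ 1 * normalPDF c σ p.2.2))) + ((-(a - b)) * ((p.1 ^ 1 * normalPDF a σ p.1) * ((p.2.1 ^ 1 * normalPDF b σ p.2.1) * (p.2.2 ^ 0 * normalPDF c σ p.2.2))) + ((-(b - c)) * ((p.1 ^ 0 * normalPDF a σ p.1) * ((p.2.1 ^ 1 * normalPDF b σ p.2.1) * (p.2.2 ^ 1 * normalPDF c σ p.2.2))) + ((-(c - a)) * ((p.1 ^ 1 * normalPDF a σ p.1) * ((p.2.1 ^ 0 * normalPDF b σ p.2.1) * (p.2.2 ^ 1 * normalPDF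 c σ p.2.2))))))))) M := hI4.add hS5
  have hS3 : Integrable (fun p : ℝ × ℝ × ℝ => (1 : ℝ) * ((p.1 ^ 0 * normalPDF a σ p.1) * ((p.2.1 ^ 2 * normalPDF b σ p.2.1) * (p.2.2 ^ 1 * normalPDF c σ p.2.2))) + ((-1 : ℝ) * ((p.1 ^ 0 * normalPDF a σ p.1) * ((p.2.1 ^ 1 * normalPDF b σ p.2.1) * (p.2.2 ^ 2 * normalPDF c σ p.2.2))) + ((1 : ℝ) * ((p.1 ^ 1 * normalPDF a σ p.1) * ((p.2.1 ^ 0 * normalPDF b σ p.2.1) * (p.2.2 ^ 2 * normalPDF c σ p.2.2))) + ((-1 : ℝ) * ((p.1 ^ 2 * normalPDF a σ p.1) * ((p.2.1 ^ 0 * normalPDF b σ p.2.1) * (p.2.2 ^ 1 * normalPDF c σ p.2.2))) + ((-(a - b)) * ((p.1 ^ 1 * normalPDF a σ p.1) * ((p.2.1 ^ 1 * normalPDF b σ p.2.1) * (p.2.2 ^ 0 * normalPDF c σ p.2.2))) + ((-(b - c)) * ((p.1 ^ 0 * normalPDF a σ p.1) * ((p.2.1 ^ 1 * normalPDF b σ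 p.2.1) * (p.2.2 ^ 1 * normalPDF c σ p.2.2))) + ((-(c - a)) * ((p.1 ^ 1 * normalPDF a σ p.1) * ((p.2.1 ^ 0 * normalPDF b σ p.2.1) * (p.2.2 ^ 1 * normalPDF c σ p.2.2)))))))))) M := hI3.add hS4
  have hS2 : Integrable (fun p : ℝ × ℝ × ℝ => (-1 : ℝ) * ((p.1 ^ 1 * normalPDF a σ p.1) * ((p.2.1 ^ 2 * normalPDF b σ p.2.1) * (p.2.2 ^ 0 * normalPDF c σ p.2.2))) + ((1 : ℝ) * ((p.1 ^ 0 * normalPDF a σ p.1) * ((p.2.1 ^ 2 * normalPDF b σ p.2.1) * (p.2.2 ^ 1 * normalPDF c σ p.2.2))) + ((-1 : ℝ) * ((p.1 ^ 0 * normalPDF a σ p.1) * ((p.2.1 ^ 1 * normalPDF b σ p.2.1) * (p.2.2 ^ 2 * normalPDF c σ p.2.2))) + ((1 : ℝ) * ((p.1 ^ 1 * normalPDF a σ p.1) * ((p.2.1 ^ 0 * normalPDF b σ p.2.1) * (p.2.2 ^ 2 * normalPDF c σ p.2.2))) + ((-1 : ℝ) * ((p.1 ^ 2 * normalPDF a σ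 p.1) * ((p.2.1 ^ 0 * normalPDF b σ p.2.1) * (p.2.2 ^ 1 * normalPDF c σ p.2.2))) + ((-(a - b)) * ((p.1 ^ 1 * normalPDF a σ p.1) * ((p.2.1 ^ 1 * normalPDF b σ p.2.1) * (p.2.2 ^ 0 * normalPDF c σ p.2.2))) + ((-(b - c)) * ((p.1 ^ 0 * normalPDF a σ p.1) * ((p.2.1 ^ 1 * normalPDF b σ p.2.1) * (p.2.2 ^ 1 * normalPDF c σ p.2.2))) + ((-(c - a)) * ((p.1 ^ 1 * normalPDF a σ p.1) * ((p.2.1 ^ 0 * normalPDF b σ p.2.1) * (p.2.2 ^ 1 * normalPDF c σ p.2.2))))))))))) M := hI2.add hS3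
  rw [integral_add hI1 hS2, integral_add hI2 hS3, integral_add hI3 hS4,
    integral_add hI4 hS5, integral_add hI5 hS6, integral_add hI6 hS7,
    integral_add hI7 hS8, integral_add hI8 hI9]
  simp only [integral_const_mul]
  rw [hM, hν]
  rw [prod_term_integral a b c σ 2 1 0, prod_term_integral a b c σ 1 2 0,
    prod_term_integral a b c σ 0 2 1, prod_term_integral a b c σ 0 1 2,
    prod_term_integral a b c σ 1 0 2, prod_term_integral a b c σ 2 0 1,
    prod_term_integral a b c σ 1 1 0, prod_term_integral a b c σ 0 1 1,
    prod_term_integral a b c σ 1 0 1]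
  have ea := moment_identity a hσ
  have eb := moment_identity b hσ
  have ec := moment_identity c hσ
  simp only [pow_one, pow_zero, one_mul] at *
  linear_combination
    ((∫ u in Set.Ioi (0 : ℝ), u * normalPDF b σ u) * (∫ u in Set.Ioi (0 : ℝ), normalPDF c σ u)
      - (∫ u in Set.Ioi (0 : ℝ), normalPDF b σ u) * (∫ u in Set.Ioi (0 : ℝ), u * normalPDF c σ u)) * ea
    + ((∫ u in Set.Ioi (0 : ℝ), normalPDF a σ u) * (∫ u in Set.Ioi (0 : ℝ), u * normalPDF c σ u)
      - (∫ u in Set.Ioi (0 : ℝ), u * normalPDF a σ u) * (∫ u in Set.Ioi (0 : ℝ), normalPDF c σ u)) * eb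
    + ((∫ u in Set.Ioi (0 : ℝ), u * normalPDF a σ u) * (∫ u in Set.Ioi (0 : ℝ), normalPDF b σ u)
      - (∫ u in Set.Ioi (0 : ℝ), normalPDF a σ u) * (∫ u in Set.Ioi (0 : ℝ), u * normalPDF b σ u)) * ec
end
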